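/- Let ℓ : ℝ → ℝ be differentiable and let θ* be a local minimum of the regularized empirical loss L_n(·;λ) at which every neuron is active, i.e., a_j* ≠ 0 for all j ∈ [m]. Write ℓ'_i = ℓ'(−y_i f(x_i;θ*)), I_j = {i ∈ [n] : w_j*^⊤(x_i⊙φ_j) = 0}, let S_j be the linear span of {x_i⊙φ_j : i ∈ I_j}, and let P_{S_j} denote orthogonal projection onto S_j. Then for every j ∈ [m], λ_j = ‖ Σ_{i=1}^n ℓ'_i y_i 1{w_j*^⊤(x_i⊙φ_j) > 0} · ((x_i⊙φ_j) − P_{S_j}(x_i⊙φ_j)) ‖₂. -/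

import Mathlib

open scoped BigOperators
open MeasureTheory

noncomputable section

/-- Vectors in `ℝ^d` with the Euclidean norm. -/
abbrev Vec (d : ℕ) := EuclideanSpace ℝ (Fin d)

/-- Hadamard (entrywise) product. -/
def nnHad {d : ℕ} (x φ : Vec d) : Vec d := WithLp.toLp 2 (fun i => x i * φ i)

/-- ReLU. -/
def nnRelu (z : ℝ) : ℝ := max z 0

/-- Euclidean dot product. -/
def nnDot {d : ℕ} (u v : Vec d) : ℝ := ∑ i, u i * v i

/-- Output of the two-layer ReLU network with masks `φ`. -/
def nnOut {d m : ℕ} (φ : ℕ → Vec d) (a : Fin m → ℝ) (w : Fin m → Vec d) (x : Vec d) : ℝ :=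
  ∑ j, a j * nnRelu (nnDot (w j) (nnHad x (φ (j : ℕ))))

/-- The regularized empirical loss `L_n(θ; λ)`. -/
def nnLoss {d m n : ℕ} (ℓ : ℝ → ℝ) (φ : ℕ → Vec d) (X : Fin n → Vec d) (Y : Fin n → ℝ)
    (lam : Fin m → ℝ) (θ : (Fin m → ℝ) × (Fin m → Vec d)) : ℝ :=
  (∑ i, ℓ (-(Y i) * nnOut φ θ.1 θ.2 (X i)))
    + (1 / 2) * ∑ j, lam j * ((θ.1 j) ^ 2 + ‖θ.2 j‖ ^ 2)

/-- The training (misclassification) error `R_n(θ; f)`. -/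
def nnErr {d m n : ℕ} (φ : ℕ → Vec d) (X : Fin n → Vec d) (Y : Fin n → ℝ)
    (θ : (Fin m → ℝ) × (Fin m → Vec d)) : ℝ :=
  (1 / (n : ℝ)) * ∑ i, if Y i = Real.sign (nnOut φ θ.1 θ.2 (X i)) then (0 : ℝ) else 1

/-- The masks are binary vectors. -/
def BinaryMasks {d : ℕ} (φ : ℕ → Vec d) : Prop := ∀ k i, φ k i = 0 ∨ φ k i = 1

/-- The mask sequence is periodic with period `p`. -/
def PeriodicMasks {d : ℕ} (φ : ℕ → Vec d) (p : ℕ) : Prop := ∀ k, φ (k + p) = φ k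

/-- Assumption 1 on the loss: convex, non-decreasing, twice differentiable, `ℓ` and `ℓ'`
are `1`-Lipschitz, and `ℓ'(z) ≤ exp (a z)` for a positive constant `a`. -/
def LossAssumption (ℓ ℓ' : ℝ → ℝ) (a : ℝ) : Prop :=
  ConvexOn ℝ Set.univ ℓ ∧ Monotone ℓ ∧ (∀ z, HasDerivAt ℓ (ℓ' z) z) ∧
  (∀ z, DifferentiableAt ℝ ℓ' z) ∧ LipschitzWith 1 ℓ ∧ LipschitzWith 1 ℓ' ∧
  0 < a ∧ ∀ z, ℓ' z ≤ Real.exp (a * z)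

/-- Assumption 2 on the dataset: all data in the unit ball, and all but `E` points are
separated with margin `γ` by some network in the class `H_φ`. -/
def DatasetAssumption {d n : ℕ} (φ : ℕ → Vec d) (X : Fin n → Vec d) (Y : Fin n → ℝ)
    (E γ : ℝ) : Prop :=
  (∀ i, ‖X i‖ ≤ 1) ∧
  ∃ (M : ℕ) (c : Fin M → ℝ) (v : Fin M → Vec d),
    1 ≤ M ∧ (∑ j, |c j|) = 1 ∧ (∀ j, ‖v j‖ = 1) ∧
    (n : ℝ) - E ≤
      ∑ i, (if γ ≤ Y i * ∑ j, c j * nnRelu (nnDot (v j) (nnHad (X i) (φ (j : ℕ)))) then (1 : ℝ)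
        else 0)

private lemma nnDot_eq_inner {d : ℕ} (u v : Vec d) : nnDot u v = (inner ℝ u v : ℝ) := by
  simp [nnDot, PiLp.inner_apply, RCLike.inner_apply, conj_trivial]
  exact Finset.sum_congr rfl fun _ _ => mul_comm _ _

private lemma nnDot_comm {d : ℕ} (u v : Vec d) : nnDot u v = nnDot v u := by
  simp [nnDot, mul_comm]

private lemma nnDot_add_smul {d : ℕ} (u x y : Vec d) (t : ℝ) :
    nnDot (u + t • x) y = nnDot u y + t * nnDot x y := by
  simp [nnDot, PiLp.add_apply, PiLp.smul_apply, smul_eq_mul, add_mul, mul_assoc,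
    Finset.sum_add_distrib, Finset.mul_sum]

private lemma nnRelu_eq (x : ℝ) : nnRelu x = (if 0 < x then (1:ℝ) else 0) * x := by
  rcases lt_trichotomy 0 x with h | h | h
  · rw [if_pos h, one_mul, nnRelu, max_eq_left h.le]
  · simp [nnRelu, ← h]
  · rw [if_neg (not_lt.mpr h.le), zero_mul, nnRelu, max_eq_right h.le]

private lemma nnRelu_line_hasDerivAt {c s : ℝ} (h : c = 0 → s = 0) :
    HasDerivAt (fun t : ℝ => nnRelu (c + t * s)) ((if 0 < c then 1 else 0) * s) 0 := by
  have htend : Filter.Tendsto (fun t : ℝ => c + t * s) (nhds 0) (nhds c) := by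
    have : Continuous (fun t : ℝ => c + t * s) := by continuity
    simpa using this.tendsto 0
  rcases lt_trichotomy 0 c with hc | hc | hc
  · rw [if_pos hc, one_mul]
    have hline : HasDerivAt (fun t : ℝ => c + t * s) s 0 := by
      simpa using ((hasDerivAt_id (0:ℝ)).mul_const s).const_add c
    refine hline.congr_of_eventuallyEq ?_
    filter_upwards [htend.eventually (eventually_gt_nhds hc)] with t ht
    exact max_eq_left ht.le
  · have hs := h hc.symm
    subst hs
    rw [mul_zero]
    have hconst : (fun t : ℝ => nnRelu (c + t * 0)) = fun _ => nnRelu c := by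
      funext t; rw [mul_zero, add_zero]
    rw [hconst]
    exact hasDerivAt_const 0 _
  · rw [if_neg (not_lt.mpr hc.le), zero_mul]
    refine (hasDerivAt_const (0:ℝ) (0:ℝ)).congr_of_eventuallyEq ?_
    filter_upwards [htend.eventually (eventually_lt_nhds hc)] with t ht
    exact max_eq_right ht.le

private lemma norm_add_smul_sq_hasDerivAt {d : ℕ} (w v : Vec d) :
    HasDerivAt (fun t : ℝ => ‖w + t • v‖ ^ 2) (2 * (inner ℝ w v : ℝ)) 0 := by
  have hfun : (fun t : ℝ => ‖w + t • v‖ ^ 2)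
      = fun t : ℝ => ‖w‖ ^ 2 + t * (2 * (inner ℝ w v : ℝ)) + t ^ 2 * ‖v‖ ^ 2 := by
    funext t
    rw [norm_add_sq_real, real_inner_smul_right, norm_smul]
    simp only [Real.norm_eq_abs, mul_pow, sq_abs]
    ring
  rw [hfun]
  have h1 : HasDerivAt (fun t : ℝ => ‖w‖ ^ 2 + t * (2 * (inner ℝ w v : ℝ)))
      (2 * (inner ℝ w v : ℝ)) 0 := by
    simpa using ((hasDerivAt_id (0:ℝ)).mul_const (2 * (inner ℝ w v : ℝ))).const_add (‖w‖ ^ 2)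
  have h2 : HasDerivAt (fun t : ℝ => t ^ 2 * ‖v‖ ^ 2) 0 0 := by
    simpa using (hasDerivAt_pow 2 (0:ℝ)).mul_const (‖v‖ ^ 2)
  have h3 := h1.add h2
  rw [add_zero] at h3
  exact h3

private lemma w_mem_orth {d n : ℕ} (z : Fin n → Vec d) (w : Vec d) :
    w ∈ (Submodule.span ℝ (z '' {i | nnDot w (z i) = 0}))ᗮ := by
  rw [Submodule.mem_orthogonal]
  intro u hu
  refine Submodule.span_induction ?_ ?_ ?_ ?_ hu
  · rintro x ⟨i, hi, rfl⟩
    have : nnDot w (z i) = 0 := hi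
    rw [← nnDot_eq_inner, nnDot_comm]
    exact this
  · exact inner_zero_left w
  · intro x y _ _ hx hy
    rw [inner_add_left, hx, hy, add_zero]
  · intro a x _ hx
    rw [real_inner_smul_left, hx, mul_zero]

private lemma inner_sum_orth {d n : ℕ} (z : Fin n → Vec d) (S : Submodule ℝ (Vec d))
    [S.HasOrthogonalProjection] (g : Fin n → ℝ) (u : Vec d) (hu : u ∈ Sᗮ) :
    (inner ℝ u (∑ i, g i • (z i - (Submodule.orthogonalProjection S (z i) : Vec d))) : ℝ)
      = ∑ i, g i * nnDot u (z i) := by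
  rw [inner_sum]
  refine Finset.sum_congr rfl fun i _ => ?_
  rw [real_inner_smul_right, inner_sub_right, nnDot_eq_inner]
  have h0 : (inner ℝ u ((Submodule.orthogonalProjection S (z i) : Vec d)) : ℝ) = 0 := by
    rw [real_inner_comm]
    exact (Submodule.mem_orthogonal S u).mp hu _ (SetLike.coe_mem _)
  rw [h0, sub_zero]

private lemma V_mem_orth {d n : ℕ} (z : Fin n → Vec d) (S : Submodule ℝ (Vec d))
    [S.HasOrthogonalProjection] (g : Fin n → ℝ) :
    (∑ i, g i • (z i - (Submodule.orthogonalProjection S (z i) : Vec d))) ∈ Sᗮ :=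
  Submodule.sum_mem _ fun i _ =>
    Submodule.smul_mem _ _ (by exact Submodule.sub_starProjection_mem_orthogonal (K := S) (z i))

/-- The final algebra: from the two first-order conditions, conclude `lamj = ‖V‖`. -/
private lemma aux_alg {d n : ℕ} (z : Fin n → Vec d) (c : Fin n → ℝ) (w : Vec d)
    (A lamj : ℝ) (hA : A ≠ 0) (hl : 0 < lamj)
    (E1 : lamj * A = ∑ i, c i * nnDot w (z i))
    (E2 : lamj * (inner ℝ w (∑ i, c i •
            (z i - (Submodule.orthogonalProjection (Submodule.span ℝ (z '' {i | nnDot w (z i) = 0}))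
              (z i) : Vec d))) : ℝ)
        = A * ∑ i, c i *
            nnDot (∑ i', c i' •
              (z i' - (Submodule.orthogonalProjection (Submodule.span ℝ (z '' {i | nnDot w (z i) = 0}))
                (z i') : Vec d))) (z i)) :
    lamj = ‖∑ i, c i •
      (z i - (Submodule.orthogonalProjection (Submodule.span ℝ (z '' {i | nnDot w (z i) = 0}))
        (z i) : Vec d))‖ := by
  set S : Submodule ℝ (Vec d) := Submodule.span ℝ (z '' {i | nnDot w (z i) = 0}) with hS
  set V : Vec d := ∑ i, c i • (z i - (Submodule.orthogonalProjection S (z i) : Vec d)) with hV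
  have hwS : w ∈ Sᗮ := w_mem_orth z w
  have hVS : V ∈ Sᗮ := hV ▸ V_mem_orth z S c
  have hwv : (inner ℝ w V : ℝ) = ∑ i, c i * nnDot w (z i) := by
    rw [hV]; exact inner_sum_orth z S c w hwS
  have hVV : (inner ℝ V V : ℝ) = ∑ i, c i * nnDot V (z i) := by
    nth_rewrite 2 [hV]
    exact inner_sum_orth z S c V hVS
  have hmain : lamj * (lamj * A) = A * ‖V‖ ^ 2 := by
    rw [← real_inner_self_eq_norm_sq, hVV, ← E2, hwv, ← E1]
  have hsq : lamj ^ 2 = ‖V‖ ^ 2 := by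
    have h2 : A * lamj ^ 2 = A * ‖V‖ ^ 2 := by rw [← hmain]; ring
    exact mul_left_cancel₀ hA h2
  rw [← Real.sqrt_sq hl.le, hsq, Real.sqrt_sq (norm_nonneg V)]

theorem local_min_all_active_lambda_formula
    {d m n : ℕ} (φ : ℕ → Vec d)
    (X : Fin n → Vec d) (Y : Fin n → ℝ)
    (hY : ∀ i, Y i = 1 ∨ Y i = -1)
    (ℓ ℓ' : ℝ → ℝ) (hderiv : ∀ z, HasDerivAt ℓ (ℓ' z) z)
    (lam : Fin m → ℝ) (hlam : ∀ j, 0 < lam j)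
    (θstar : (Fin m → ℝ) × (Fin m → Vec d))
    (hmin : IsLocalMin (nnLoss ℓ φ X Y lam) θstar)
    (hactive : ∀ j, θstar.1 j ≠ 0) :
    ∀ j : Fin m,
      lam j =
        ‖∑ i, (ℓ' (-(Y i) * nnOut φ θstar.1 θstar.2 (X i)) * Y i *
            (if 0 < nnDot (θstar.2 j) (nnHad (X i) (φ (j : ℕ))) then (1 : ℝ) else 0)) •
          (nnHad (X i) (φ (j : ℕ)) -
            (Submodule.orthogonalProjection
              (Submodule.span ℝ
                ((fun i : Fin n => nnHad (X i) (φ (j : ℕ))) ''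
                  {i | nnDot (θstar.2 j) (nnHad (X i) (φ (j : ℕ))) = 0}))
              (nnHad (X i) (φ (j : ℕ))) : Vec d))‖ := by
  classical
  intro j
  -- generic principle: the derivative of the loss along any smooth curve through θstar is 0
  have keymin : ∀ (γ : ℝ → (Fin m → ℝ) × (Fin m → Vec d)) (D : ℝ), Continuous γ → γ 0 = θstar →
      HasDerivAt (fun t => nnLoss ℓ φ X Y lam (γ t)) D 0 → D = 0 := by
    intro γ D hγ h0 hD
    refine IsLocalMin.hasDerivAt_eq_zero ?_ hD
    have ht : Filter.Tendsto γ (nhds 0) (nhds θstar) := by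
      have := hγ.tendsto 0
      rwa [h0] at this
    have hev : ∀ᶠ t in nhds 0,
        nnLoss ℓ φ X Y lam θstar ≤ nnLoss ℓ φ X Y lam (γ t) := ht.eventually hmin
    exact hev.mono fun t htt => by simpa [h0] using htt
  ---------------------------------------------------------------------------
  -- Curve 1 : perturb the output weight a_j
  ---------------------------------------------------------------------------
  have out1 : ∀ (t : ℝ) (i : Fin n),
      nnOut φ (Function.update θstar.1 j (θstar.1 j + t)) θstar.2 (X i)
        = nnOut φ θstar.1 θstar.2 (X i)
          + t * nnRelu (nnDot (θstar.2 j) (nnHad (X i) (φ (j : ℕ)))) := by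
    intro t i
    simp only [nnOut, Function.update_apply]
    rw [show (∑ k : Fin m, (if k = j then θstar.1 j + t else θstar.1 k) *
          nnRelu (nnDot (θstar.2 k) (nnHad (X i) (φ (k : ℕ)))))
        = ∑ k : Fin m, (θstar.1 k * nnRelu (nnDot (θstar.2 k) (nnHad (X i) (φ (k : ℕ))))
            + if k = j then t * nnRelu (nnDot (θstar.2 k) (nnHad (X i) (φ (k : ℕ)))) else 0)
      from Finset.sum_congr rfl fun k _ => by
        by_cases hk : k = j
        · subst hk; simp only [eq_self_iff_true, if_true]; ring
        · simp only [if_neg hk, add_zero]]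
    rw [Finset.sum_add_distrib, Finset.sum_ite_eq' Finset.univ j
      (fun k => t * nnRelu (nnDot (θstar.2 k) (nnHad (X i) (φ (k : ℕ)))))]
    simp
  have hcont1 : Continuous (fun t : ℝ =>
      ((Function.update θstar.1 j (θstar.1 j + t), θstar.2) :
        (Fin m → ℝ) × (Fin m → Vec d))) := by
    refine Continuous.prodMk ?_ continuous_const
    refine continuous_pi fun k => ?_
    simp only [Function.update_apply]
    split_ifs
    · exact continuous_const.add continuous_id
    · exact continuous_const
  have h01 : (fun t : ℝ =>
      ((Function.update θstar.1 j (θstar.1 j + t), θstar.2) :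
        (Fin m → ℝ) × (Fin m → Vec d))) 0 = θstar := by
    simp [Function.update_eq_self]
  have hfun1 : (fun t : ℝ =>
        nnLoss ℓ φ X Y lam (Function.update θstar.1 j (θstar.1 j + t), θstar.2))
      = fun t : ℝ =>
        (∑ i, ℓ (-(Y i) * (nnOut φ θstar.1 θstar.2 (X i)
            + t * nnRelu (nnDot (θstar.2 j) (nnHad (X i) (φ (j : ℕ)))))))
        + (1 / 2) * ∑ k, lam k *
            ((if k = j then θstar.1 j + t else θstar.1 k) ^ 2 + ‖θstar.2 k‖ ^ 2) := by
    funext t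
    simp only [nnLoss, out1, Function.update_apply]
  have hD1 : HasDerivAt (fun t : ℝ =>
        nnLoss ℓ φ X Y lam (Function.update θstar.1 j (θstar.1 j + t), θstar.2))
      ((∑ i, ℓ' (-(Y i) * nnOut φ θstar.1 θstar.2 (X i)) *
          (-(Y i) * nnRelu (nnDot (θstar.2 j) (nnHad (X i) (φ (j : ℕ))))))
        + (1 / 2) * (lam j * (2 * θstar.1 j))) 0 := by
    rw [hfun1]
    refine HasDerivAt.add (HasDerivAt.fun_sum fun i _ => ?_) (HasDerivAt.const_mul _ ?_)
    · have hin : HasDerivAt (fun t : ℝ => -(Y i) * (nnOut φ θstar.1 θstar.2 (X i)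
            + t * nnRelu (nnDot (θstar.2 j) (nnHad (X i) (φ (j : ℕ))))))
          (-(Y i) * nnRelu (nnDot (θstar.2 j) (nnHad (X i) (φ (j : ℕ))))) 0 := by
        have h1 : HasDerivAt (fun t : ℝ => nnOut φ θstar.1 θstar.2 (X i)
              + t * nnRelu (nnDot (θstar.2 j) (nnHad (X i) (φ (j : ℕ)))))
            (nnRelu (nnDot (θstar.2 j) (nnHad (X i) (φ (j : ℕ))))) 0 := by
          simpa using ((hasDerivAt_id (0:ℝ)).mul_const
            (nnRelu (nnDot (θstar.2 j) (nnHad (X i) (φ (j : ℕ)))))).const_add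
            (nnOut φ θstar.1 θstar.2 (X i))
        exact h1.const_mul (-(Y i))
      have := (hderiv (-(Y i) * (nnOut φ θstar.1 θstar.2 (X i)
          + 0 * nnRelu (nnDot (θstar.2 j) (nnHad (X i) (φ (j : ℕ))))))).comp 0 hin
      simpa [Function.comp_def] using this
    · have : HasDerivAt (fun t : ℝ => ∑ k, lam k *
            ((if k = j then θstar.1 j + t else θstar.1 k) ^ 2 + ‖θstar.2 k‖ ^ 2))
          (∑ k, if k = j then lam j * (2 * θstar.1 j) else 0) 0 := by
        refine HasDerivAt.fun_sum fun k _ => ?_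
        rcases eq_or_ne k j with rfl | hk
        · simp only [if_pos rfl]
          have hb : HasDerivAt (fun t : ℝ => θstar.1 k + t) 1 0 := by
            simpa using (hasDerivAt_id (0:ℝ)).const_add (θstar.1 k)
          have h2 := ((hb.pow 2).add_const (‖θstar.2 k‖ ^ 2)).const_mul (lam k)
          simpa using h2
        · simp only [if_neg hk]
          exact hasDerivAt_const 0 _
      simpa [Finset.sum_ite_eq'] using this
  have E1raw := keymin _ _ hcont1 h01 hD1
  have E1 : lam j * θstar.1 j
      = ∑ i, (ℓ' (-(Y i) * nnOut φ θstar.1 θstar.2 (X i)) * Y i *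
          (if 0 < nnDot (θstar.2 j) (nnHad (X i) (φ (j : ℕ))) then (1:ℝ) else 0)) *
          nnDot (θstar.2 j) (nnHad (X i) (φ (j : ℕ))) := by
    have hs : (∑ i, ℓ' (-(Y i) * nnOut φ θstar.1 θstar.2 (X i)) *
          (-(Y i) * nnRelu (nnDot (θstar.2 j) (nnHad (X i) (φ (j : ℕ))))))
        = -∑ i, (ℓ' (-(Y i) * nnOut φ θstar.1 θstar.2 (X i)) * Y i *
          (if 0 < nnDot (θstar.2 j) (nnHad (X i) (φ (j : ℕ))) then (1:ℝ) else 0)) *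
          nnDot (θstar.2 j) (nnHad (X i) (φ (j : ℕ))) := by
      rw [← Finset.sum_neg_distrib]
      refine Finset.sum_congr rfl fun i _ => ?_
      rw [nnRelu_eq]
      ring
    rw [hs] at E1raw
    linear_combination E1raw
  ---------------------------------------------------------------------------
  -- Curve 2 : perturb the hidden weight w_j in the direction of the vector V
  ---------------------------------------------------------------------------
  set V : Vec d := ∑ i, (ℓ' (-(Y i) * nnOut φ θstar.1 θstar.2 (X i)) * Y i *
      (if 0 < nnDot (θstar.2 j) (nnHad (X i) (φ (j : ℕ))) then (1 : ℝ) else 0)) •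
    (nnHad (X i) (φ (j : ℕ)) -
      (Submodule.orthogonalProjection
        (Submodule.span ℝ
          ((fun i : Fin n => nnHad (X i) (φ (j : ℕ))) ''
            {i | nnDot (θstar.2 j) (nnHad (X i) (φ (j : ℕ))) = 0}))
        (nnHad (X i) (φ (j : ℕ))) : Vec d)) with hV
  -- V is orthogonal to every data point on the boundary of the ReLU
  have hsz : ∀ i : Fin n, nnDot (θstar.2 j) (nnHad (X i) (φ (j : ℕ))) = 0 →
      nnDot V (nnHad (X i) (φ (j : ℕ))) = 0 := by
    intro i hi
    have hVS : V ∈ (Submodule.span ℝ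
        ((fun i : Fin n => nnHad (X i) (φ (j : ℕ))) ''
          {i | nnDot (θstar.2 j) (nnHad (X i) (φ (j : ℕ))) = 0}))ᗮ := by
      rw [hV]
      exact V_mem_orth (fun i : Fin n => nnHad (X i) (φ (j : ℕ))) _ _
    have hzS : nnHad (X i) (φ (j : ℕ)) ∈ Submodule.span ℝ
        ((fun i : Fin n => nnHad (X i) (φ (j : ℕ))) ''
          {i | nnDot (θstar.2 j) (nnHad (X i) (φ (j : ℕ))) = 0}) :=
      Submodule.subset_span ⟨i, hi, rfl⟩
    rw [nnDot_eq_inner, real_inner_comm]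
    exact (Submodule.mem_orthogonal _ V).mp hVS _ hzS
  have out2 : ∀ (t : ℝ) (i : Fin n),
      nnOut φ θstar.1 (Function.update θstar.2 j (θstar.2 j + t • V)) (X i)
        = nnOut φ θstar.1 θstar.2 (X i)
          + θstar.1 j * (nnRelu (nnDot (θstar.2 j) (nnHad (X i) (φ (j : ℕ)))
              + t * nnDot V (nnHad (X i) (φ (j : ℕ))))
            - nnRelu (nnDot (θstar.2 j) (nnHad (X i) (φ (j : ℕ))))) := by
    intro t i
    simp only [nnOut, Function.update_apply]
    rw [show (∑ k : Fin m, θstar.1 k *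
          nnRelu (nnDot (if k = j then θstar.2 j + t • V else θstar.2 k)
            (nnHad (X i) (φ (k : ℕ)))))
        = ∑ k : Fin m, (θstar.1 k * nnRelu (nnDot (θstar.2 k) (nnHad (X i) (φ (k : ℕ))))
            + if k = j then θstar.1 j *
                (nnRelu (nnDot (θstar.2 j + t • V) (nnHad (X i) (φ (j : ℕ))))
                  - nnRelu (nnDot (θstar.2 j) (nnHad (X i) (φ (j : ℕ))))) else 0)
      from Finset.sum_congr rfl fun k _ => by
        by_cases hk : k = j
        · subst hk; simp only [eq_self_iff_true, if_true]; ring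
        · simp only [if_neg hk, add_zero]]
    rw [Finset.sum_add_distrib, Finset.sum_ite_eq' Finset.univ j
      (fun k => θstar.1 j * (nnRelu (nnDot (θstar.2 j + t • V) (nnHad (X i) (φ (j : ℕ))))
        - nnRelu (nnDot (θstar.2 j) (nnHad (X i) (φ (j : ℕ)))))), nnDot_add_smul]
    simp
  have hcont2 : Continuous (fun t : ℝ =>
      ((θstar.1, Function.update θstar.2 j (θstar.2 j + t • V)) :
        (Fin m → ℝ) × (Fin m → Vec d))) := by
    refine Continuous.prodMk continuous_const ?_
    refine continuous_pi fun k => ?_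
    simp only [Function.update_apply]
    split_ifs
    · exact continuous_const.add (continuous_id.smul continuous_const)
    · exact continuous_const
  have h02 : (fun t : ℝ =>
      ((θstar.1, Function.update θstar.2 j (θstar.2 j + t • V)) :
        (Fin m → ℝ) × (Fin m → Vec d))) 0 = θstar := by
    simp [Function.update_eq_self]
  have hfun2 : (fun t : ℝ =>
        nnLoss ℓ φ X Y lam (θstar.1, Function.update θstar.2 j (θstar.2 j + t • V)))
      = fun t : ℝ =>
        (∑ i, ℓ (-(Y i) * (nnOut φ θstar.1 θstar.2 (X i)
            + θstar.1 j * (nnRelu (nnDot (θstar.2 j) (nnHad (X i) (φ (j : ℕ)))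
                + t * nnDot V (nnHad (X i) (φ (j : ℕ))))
              - nnRelu (nnDot (θstar.2 j) (nnHad (X i) (φ (j : ℕ))))))))
        + (1 / 2) * ∑ k, lam k *
            ((θstar.1 k) ^ 2 + ‖(if k = j then θstar.2 j + t • V else θstar.2 k)‖ ^ 2) := by
    funext t
    simp only [nnLoss, out2, Function.update_apply]
  have hD2 : HasDerivAt (fun t : ℝ =>
        nnLoss ℓ φ X Y lam (θstar.1, Function.update θstar.2 j (θstar.2 j + t • V)))
      ((∑ i, ℓ' (-(Y i) * nnOut φ θstar.1 θstar.2 (X i)) *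
          (-(Y i) * (θstar.1 j *
            ((if 0 < nnDot (θstar.2 j) (nnHad (X i) (φ (j : ℕ))) then (1:ℝ) else 0) *
              nnDot V (nnHad (X i) (φ (j : ℕ)))))))
        + (1 / 2) * (lam j * (2 * (inner ℝ (θstar.2 j) V : ℝ)))) 0 := by
    rw [hfun2]
    refine HasDerivAt.add (HasDerivAt.fun_sum fun i _ => ?_) (HasDerivAt.const_mul _ ?_)
    · have hrel := nnRelu_line_hasDerivAt (hsz i)
      have hin : HasDerivAt (fun t : ℝ => -(Y i) * (nnOut φ θstar.1 θstar.2 (X i)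
            + θstar.1 j * (nnRelu (nnDot (θstar.2 j) (nnHad (X i) (φ (j : ℕ)))
                + t * nnDot V (nnHad (X i) (φ (j : ℕ))))
              - nnRelu (nnDot (θstar.2 j) (nnHad (X i) (φ (j : ℕ)))))))
          (-(Y i) * (θstar.1 j *
            ((if 0 < nnDot (θstar.2 j) (nnHad (X i) (φ (j : ℕ))) then (1:ℝ) else 0) *
              nnDot V (nnHad (X i) (φ (j : ℕ)))))) 0 :=
        ((((hrel.sub_const (nnRelu (nnDot (θstar.2 j) (nnHad (X i) (φ (j : ℕ)))))).const_mul
          (θstar.1 j)).const_add (nnOut φ θstar.1 θstar.2 (X i))).const_mul (-(Y i)))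
      have := (hderiv (-(Y i) * (nnOut φ θstar.1 θstar.2 (X i)
          + θstar.1 j * (nnRelu (nnDot (θstar.2 j) (nnHad (X i) (φ (j : ℕ)))
              + 0 * nnDot V (nnHad (X i) (φ (j : ℕ))))
            - nnRelu (nnDot (θstar.2 j) (nnHad (X i) (φ (j : ℕ)))))))).comp 0 hin
      simpa [Function.comp_def] using this
    · have : HasDerivAt (fun t : ℝ => ∑ k, lam k *
            ((θstar.1 k) ^ 2 + ‖(if k = j then θstar.2 j + t • V else θstar.2 k)‖ ^ 2))
          (∑ k, if k = j then lam j * (2 * (inner ℝ (θstar.2 j) V : ℝ)) else 0) 0 := by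
        refine HasDerivAt.fun_sum fun k _ => ?_
        rcases eq_or_ne k j with rfl | hk
        · simp only [eq_self_iff_true, if_true]
          exact ((norm_add_smul_sq_hasDerivAt (θstar.2 k) V).const_add
            ((θstar.1 k) ^ 2)).const_mul (lam k)
        · simp only [if_neg hk]
          exact hasDerivAt_const 0 _
      simpa [Finset.sum_ite_eq'] using this
  have E2raw := keymin _ _ hcont2 h02 hD2
  have E2 : lam j * (inner ℝ (θstar.2 j) V : ℝ)
      = θstar.1 j * ∑ i, (ℓ' (-(Y i) * nnOut φ θstar.1 θstar.2 (X i)) * Y i *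
          (if 0 < nnDot (θstar.2 j) (nnHad (X i) (φ (j : ℕ))) then (1:ℝ) else 0)) *
          nnDot V (nnHad (X i) (φ (j : ℕ))) := by
    have hs : (∑ i, ℓ' (-(Y i) * nnOut φ θstar.1 θstar.2 (X i)) *
          (-(Y i) * (θstar.1 j *
            ((if 0 < nnDot (θstar.2 j) (nnHad (X i) (φ (j : ℕ))) then (1:ℝ) else 0) *
              nnDot V (nnHad (X i) (φ (j : ℕ)))))))
        = -(θstar.1 j * ∑ i, (ℓ' (-(Y i) * nnOut φ θstar.1 θstar.2 (X i)) * Y i *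
          (if 0 < nnDot (θstar.2 j) (nnHad (X i) (φ (j : ℕ))) then (1:ℝ) else 0)) *
          nnDot V (nnHad (X i) (φ (j : ℕ)))) := by
      rw [Finset.mul_sum, ← Finset.sum_neg_distrib]
      refine Finset.sum_congr rfl fun i _ => ?_
      ring
    rw [hs] at E2raw
    linear_combination E2raw
  ---------------------------------------------------------------------------
  -- Conclusion
  ---------------------------------------------------------------------------
  rw [hV] at E2 ⊢
  exact aux_alg (fun i : Fin n => nnHad (X i) (φ (j : ℕ)))
    (fun i : Fin n => ℓ' (-(Y i) * nnOut φ θstar.1 θstar.2 (X i)) * Y i *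
      (if 0 < nnDot (θstar.2 j) (nnHad (X i) (φ (j : ℕ))) then (1 : ℝ) else 0))
    (θstar.2 j) (θstar.1 j) (lam j) (hactive j) (hlam j) E1 E2
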